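/- As u → ∞, the truncated-normal exceedance mean μ₁(u) = u² + 1 - u·φ(u)/(1-Φ(u)) satisfies μ₁(u) ~ 2/(u² - 1), i.e., μ₁(u)·(u²-1)/2 → 1. -/

import Mathlib

open MeasureTheory Real Filter Set

/-- Standard normal density. -/
noncomputable def phi (x : ℝ) : ℝ := (Real.sqrt (2 * π))⁻¹ * Real.exp (-x ^ 2 / 2)

/-- Standard normal CDF. -/
noncomputable def Phi (x : ℝ) : ℝ := ∫ t in Set.Iic x, phi t

lemma phi_pos (x : ℝ) : 0 < phi x := by unfold phi; positivity



lemma phi_eq (x : ℝ) : phi x = (Real.sqrt (2 * π))⁻¹ * Real.exp (-(1/2) * x ^ 2) := by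
  unfold phi; ring_nf

lemma phi_integrable : Integrable phi := by
  have h := integrable_exp_neg_mul_sq (b := 1/2) (by norm_num)
  have := h.const_mul ((Real.sqrt (2 * π))⁻¹)
  refine this.congr (Filter.Eventually.of_forall fun x => ?_)
  rw [phi_eq]

lemma phi_integral : ∫ x, phi x = 1 := by
  have h : (∫ x : ℝ, Real.exp (-(1/2) * x ^ 2)) = Real.sqrt (π / (1/2)) := integral_gaussian (1/2)
  have : (∫ x, phi x) = (Real.sqrt (2 * π))⁻¹ * ∫ x, Real.exp (-(1/2) * x ^ 2) := by
    rw [← integral_const_mul]; congr 1; funext x; rw [phi_eq]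
  rw [this, h]
  rw [show π / (1/2) = 2 * π by ring]
  rw [inv_mul_cancel₀]
  positivity


lemma continuous_phi : Continuous phi := by
  unfold phi; fun_prop

lemma hasDerivAt_phi (x : ℝ) : HasDerivAt phi (-x * phi x) x := by
  have h1 : HasDerivAt (fun t : ℝ => -t ^ 2 / 2) (-x) x := by
    have := ((hasDerivAt_pow 2 x).neg).div_const 2
    refine this.congr_deriv ?_
    push_cast; ring
  have h3 := (h1.exp).const_mul ((Real.sqrt (2 * π))⁻¹)
  unfold phi
  refine h3.congr_deriv ?_
  ring

lemma phi_tendsto : Tendsto phi atTop (nhds 0) := by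
  unfold phi
  rw [show (0:ℝ) = (Real.sqrt (2 * π))⁻¹ * 0 by ring]
  apply Filter.Tendsto.const_mul
  apply Real.tendsto_exp_atBot.comp
  have h1 : Tendsto (fun x : ℝ => x ^ 2 / 2) atTop atTop :=
    (tendsto_pow_atTop two_ne_zero).atTop_div_const (by norm_num)
  have := tendsto_neg_atTop_atBot.comp h1
  apply this.congr
  intro x; simp [neg_div]

-- tendsto of rational tails
lemma inv_pow_tendsto (n : ℕ) (hn : n ≠ 0) : Tendsto (fun t : ℝ => (t ^ n)⁻¹) atTop (nhds 0) :=
  (tendsto_pow_atTop hn).inv_tendsto_atTop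

lemma gA_tendsto : Tendsto (fun t : ℝ => (t^6 - t^4 + 3*t^2 - 15)/t^7) atTop (nhds 0) := by
  have h : Tendsto (fun t : ℝ => (t^1)⁻¹ - (t^3)⁻¹ + 3*(t^5)⁻¹ - 15*(t^7)⁻¹) atTop
      (nhds (0 - 0 + 3*0 - 15*0)) := by
    exact (((inv_pow_tendsto 1 one_ne_zero).sub (inv_pow_tendsto 3 (by norm_num))).add
      ((inv_pow_tendsto 5 (by norm_num)).const_mul 3)).sub ((inv_pow_tendsto 7 (by norm_num)).const_mul 15)
  rw [show (0:ℝ) - 0 + 3*0 - 15*0 = 0 by ring] at h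
  apply h.congr'
  filter_upwards [eventually_gt_atTop (0:ℝ)] with t ht
  have : t ≠ 0 := ne_of_gt ht
  field_simp

lemma gB_tendsto : Tendsto (fun t : ℝ => (t^4 - t^2 + 3)/t^5) atTop (nhds 0) := by
  have h : Tendsto (fun t : ℝ => (t^1)⁻¹ - (t^3)⁻¹ + 3*(t^5)⁻¹) atTop
      (nhds (0 - 0 + 3*0)) := by
    exact ((inv_pow_tendsto 1 one_ne_zero).sub (inv_pow_tendsto 3 (by norm_num))).add
      ((inv_pow_tendsto 5 (by norm_num)).const_mul 3)
  rw [show (0:ℝ) - 0 + 3*0 = 0 by ring] at h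
  apply h.congr'
  filter_upwards [eventually_gt_atTop (0:ℝ)] with t ht
  have : t ≠ 0 := ne_of_gt ht
  field_simp

lemma hasDerivAt_A (x : ℝ) (hx : x ≠ 0) :
    HasDerivAt (fun t : ℝ => -(phi t * ((t^6 - t^4 + 3*t^2 - 15)/t^7)))
      (phi x * (1 - 105/x^8)) x := by
  have hp : HasDerivAt (fun t : ℝ => t^6 - t^4 + 3*t^2 - 15) (6*x^5 - 4*x^3 + 6*x) x := by
    have h6 := hasDerivAt_pow 6 x
    have h4 := hasDerivAt_pow 4 x
    have h2 := (hasDerivAt_pow 2 x).const_mul (3:ℝ)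
    refine (((h6.sub h4).add h2).sub_const 15).congr_deriv ?_
    push_cast; ring
  have h7 := hasDerivAt_pow 7 x
  have hg := hp.div h7 (pow_ne_zero 7 hx)
  have hmul := ((hasDerivAt_phi x).mul hg).neg
  refine hmul.congr_deriv ?_
  simp only [Pi.div_apply]
  have h8 : x^8 ≠ 0 := pow_ne_zero 8 hx
  push_cast
  field_simp
  ring

lemma hasDerivAt_B (x : ℝ) (hx : x ≠ 0) :
    HasDerivAt (fun t : ℝ => -(phi t * ((t^4 - t^2 + 3)/t^5)))
      (phi x * (1 + 15/x^6)) x := by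
  have hp : HasDerivAt (fun t : ℝ => t^4 - t^2 + 3) (4*x^3 - 2*x) x := by
    have h4 := hasDerivAt_pow 4 x
    have h2 := hasDerivAt_pow 2 x
    refine ((h4.sub h2).add_const 3).congr_deriv ?_
    push_cast; ring
  have h5 := hasDerivAt_pow 5 x
  have hg := hp.div h5 (pow_ne_zero 5 hx)
  have hmul := ((hasDerivAt_phi x).mul hg).neg
  refine hmul.congr_deriv ?_
  simp only [Pi.div_apply]
  push_cast
  field_simp
  ring

lemma one_sub_Phi (u : ℝ) : 1 - Phi u = ∫ t in Set.Ioi u, phi t := by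
  have h := intervalIntegral.integral_Iic_add_Ioi (b := u) (μ := volume)
    phi_integrable.integrableOn phi_integrable.integrableOn
  rw [phi_integral] at h
  unfold Phi
  linarith

lemma integrableOn_mul (u c : ℝ) (hu : 0 < u) (q : ℝ → ℝ) (hq : Measurable q)
    (hbd : ∀ t ∈ Ioi u, |q t| ≤ c) :
    IntegrableOn (fun t => phi t * q t) (Ioi u) := by
  apply Integrable.mono' ((phi_integrable.integrableOn).const_mul c)
  · exact ((continuous_phi.measurable.mul hq).aestronglyMeasurable).restrict
  · rw [ae_restrict_iff' measurableSet_Ioi]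
    apply Filter.Eventually.of_forall
    intro t ht
    have h1 := phi_pos t
    have h2 := hbd t ht
    rw [norm_mul, Real.norm_eq_abs, Real.norm_eq_abs, abs_of_pos h1]
    calc phi t * |q t| ≤ phi t * c := by nlinarith
      _ = c * phi t := by ring

lemma qA_bound (u : ℝ) (hu : 0 < u) : ∀ t ∈ Ioi u, |1 - 105/t^8| ≤ 1 + 105/u^8 := by
  intro t ht
  have ht' : u < t := ht
  have h0 : (0:ℝ) < t := lt_trans hu ht'
  have h1 : (0:ℝ) < u^8 := by positivity
  have h2 : u^8 ≤ t^8 := by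
    apply pow_le_pow_left₀ (le_of_lt hu) (le_of_lt ht')
  have h3 : (0:ℝ) < t^8 := by positivity
  have h4 : 105/t^8 ≤ 105/u^8 := by
    apply div_le_div_of_nonneg_left (by norm_num) h1 h2
  have h5 : (0:ℝ) < 105/t^8 := by positivity
  rw [abs_le]
  constructor <;> nlinarith

lemma qB_bound (u : ℝ) (hu : 0 < u) : ∀ t ∈ Ioi u, |1 + 15/t^6| ≤ 1 + 15/u^6 := by
  intro t ht
  have ht' : u < t := ht
  have h0 : (0:ℝ) < t := lt_trans hu ht'
  have h1 : (0:ℝ) < u^6 := by positivity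
  have h2 : u^6 ≤ t^6 := pow_le_pow_left₀ (le_of_lt hu) (le_of_lt ht') 6
  have h3 : (0:ℝ) < t^6 := by positivity
  have h4 : 15/t^6 ≤ 15/u^6 := div_le_div_of_nonneg_left (by norm_num) h1 h2
  have h5 : (0:ℝ) < 15/t^6 := by positivity
  rw [abs_le]
  constructor <;> nlinarith

lemma intA_eq (u : ℝ) (hu : 0 < u) :
    ∫ t in Ioi u, phi t * (1 - 105/t^8) = phi u * ((u^6 - u^4 + 3*u^2 - 15)/u^7) := by
  have hder : ∀ x ∈ Ici u, HasDerivAt (fun t : ℝ => -(phi t * ((t^6 - t^4 + 3*t^2 - 15)/t^7)))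
      (phi x * (1 - 105/x^8)) x := fun x hx =>
    hasDerivAt_A x (ne_of_gt (lt_of_lt_of_le hu hx))
  have hint : IntegrableOn (fun x => phi x * (1 - 105/x^8)) (Ioi u) := by
    apply integrableOn_mul u (1 + 105/u^8) hu
    · exact measurable_const.sub (measurable_const.div ((measurable_id.pow_const 8)))
    · exact qA_bound u hu
  have htend : Tendsto (fun t : ℝ => -(phi t * ((t^6 - t^4 + 3*t^2 - 15)/t^7))) atTop (nhds 0) := by
    have := (phi_tendsto.mul gA_tendsto).neg
    simpa using this
  have := integral_Ioi_of_hasDerivAt_of_tendsto' hder hint htend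
  rw [this]; ring

lemma intB_eq (u : ℝ) (hu : 0 < u) :
    ∫ t in Ioi u, phi t * (1 + 15/t^6) = phi u * ((u^4 - u^2 + 3)/u^5) := by
  have hder : ∀ x ∈ Ici u, HasDerivAt (fun t : ℝ => -(phi t * ((t^4 - t^2 + 3)/t^5)))
      (phi x * (1 + 15/x^6)) x := fun x hx =>
    hasDerivAt_B x (ne_of_gt (lt_of_lt_of_le hu hx))
  have hint : IntegrableOn (fun x => phi x * (1 + 15/x^6)) (Ioi u) := by
    apply integrableOn_mul u (1 + 15/u^6) hu
    · exact measurable_const.add (measurable_const.div ((measurable_id.pow_const 6)))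
    · exact qB_bound u hu
  have htend : Tendsto (fun t : ℝ => -(phi t * ((t^4 - t^2 + 3)/t^5))) atTop (nhds 0) := by
    have := (phi_tendsto.mul gB_tendsto).neg
    simpa using this
  have := integral_Ioi_of_hasDerivAt_of_tendsto' hder hint htend
  rw [this]; ring

lemma tail_lower (u : ℝ) (hu : 0 < u) :
    phi u * ((u^6 - u^4 + 3*u^2 - 15)/u^7) ≤ 1 - Phi u := by
  rw [one_sub_Phi, ← intA_eq u hu]
  apply setIntegral_mono_on
  · apply integrableOn_mul u (1 + 105/u^8) hu
    · exact measurable_const.sub (measurable_const.div ((measurable_id.pow_const 8)))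
    · exact qA_bound u hu
  · exact phi_integrable.integrableOn
  · exact measurableSet_Ioi
  · intro t ht
    have h0 : (0:ℝ) < t := lt_trans hu ht
    have h1 : (0:ℝ) < 105/t^8 := by positivity
    nlinarith [phi_pos t]

lemma tail_upper (u : ℝ) (hu : 0 < u) :
    1 - Phi u ≤ phi u * ((u^4 - u^2 + 3)/u^5) := by
  rw [one_sub_Phi, ← intB_eq u hu]
  apply setIntegral_mono_on
  · exact phi_integrable.integrableOn
  · apply integrableOn_mul u (1 + 15/u^6) hu
    · exact measurable_const.add (measurable_const.div ((measurable_id.pow_const 6)))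
    · exact qB_bound u hu
  · exact measurableSet_Ioi
  · intro t ht
    have h0 : (0:ℝ) < t := lt_trans hu ht
    have h1 : (0:ℝ) < 15/t^6 := by positivity
    nlinarith [phi_pos t]

lemma D1_pos (u : ℝ) (hu : 2 ≤ u) : (0:ℝ) < u^6 - u^4 + 3*u^2 - 15 := by
  have hu0 : (0:ℝ) < u := by linarith
  have h2 : (4:ℝ) ≤ u^2 := by nlinarith
  have h4 : (16:ℝ) ≤ u^4 := by nlinarith
  have h6 : u^4*4 ≤ u^6 := by nlinarith [mul_nonneg (pow_nonneg hu0.le 4) (sub_nonneg.mpr h2)]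
  linarith

noncomputable def Hf (u : ℝ) : ℝ := (u^2 + 1 - u^6/(u^4 - u^2 + 3)) * (u^2 - 1) / 2
noncomputable def Lf (u : ℝ) : ℝ := (u^2 + 1 - u^8/(u^6 - u^4 + 3*u^2 - 15)) * (u^2 - 1) / 2

lemma Hf_tendsto : Tendsto Hf atTop (nhds 1) := by
  have hcont : ContinuousAt (fun s : ℝ => (2 + 3*s^2) * (1 - s^2) / (2 - 2*s^2 + 6*s^4)) 0 := by
    apply ContinuousAt.div (by fun_prop) (by fun_prop)
    norm_num
  have h0 : ((2 + 3*(0:ℝ)^2) * (1 - (0:ℝ)^2) / (2 - 2*(0:ℝ)^2 + 6*(0:ℝ)^4)) = 1 := by norm_num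
  have hcomp := (hcont.tendsto.comp tendsto_inv_atTop_zero)
  rw [h0] at hcomp
  apply hcomp.congr'
  filter_upwards [eventually_ge_atTop (2:ℝ)] with u hu
  have hu0 : u ≠ 0 := by intro h; rw [h] at hu; norm_num at hu
  have hD2 : u^4 - u^2 + 3 ≠ 0 := by nlinarith [sq_nonneg (u^2-1)]
  show (2 + 3*(u⁻¹)^2) * (1 - (u⁻¹)^2) / (2 - 2*(u⁻¹)^2 + 6*(u⁻¹)^4) = Hf u
  have hd : 2 - 2*(u⁻¹)^2 + 6*(u⁻¹)^4 ≠ 0 := by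
    have heq : 2 - 2*(u⁻¹)^2 + 6*(u⁻¹)^4 = 2*(u^4 - u^2 + 3)/u^4 := by
      field_simp; ring
    rw [heq]
    have h4 : u^4 ≠ 0 := pow_ne_zero 4 hu0
    exact div_ne_zero (by exact mul_ne_zero two_ne_zero hD2) h4
  have hHf : Hf u = ((2*u^2+3)*(u^2-1)) / (2*(u^4 - u^2 + 3)) := by
    unfold Hf
    rw [sub_div' hD2]
    field_simp
    ring
  rw [hHf, div_eq_div_iff hd (mul_ne_zero two_ne_zero hD2)]
  field_simp
  ring

lemma Lf_tendsto : Tendsto Lf atTop (nhds 1) := by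
  have hcont : ContinuousAt
      (fun s : ℝ => (2 - 12*s^2 - 15*s^4) * (1 - s^2) / (2 - 2*s^2 + 6*s^4 - 30*s^6)) 0 := by
    apply ContinuousAt.div (by fun_prop) (by fun_prop)
    norm_num
  have h0 : ((2 - 12*(0:ℝ)^2 - 15*(0:ℝ)^4) * (1 - (0:ℝ)^2)
      / (2 - 2*(0:ℝ)^2 + 6*(0:ℝ)^4 - 30*(0:ℝ)^6)) = 1 := by norm_num
  have hcomp := (hcont.tendsto.comp tendsto_inv_atTop_zero)
  rw [h0] at hcomp
  apply hcomp.congr'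
  filter_upwards [eventually_ge_atTop (2:ℝ)] with u hu
  have hu0 : u ≠ 0 := by intro h; rw [h] at hu; norm_num at hu
  have hD1pos : (0:ℝ) < u^6 - u^4 + 3*u^2 - 15 := D1_pos u hu
  have hD1 : u^6 - u^4 + 3*u^2 - 15 ≠ 0 := ne_of_gt hD1pos
  show (2 - 12*(u⁻¹)^2 - 15*(u⁻¹)^4) * (1 - (u⁻¹)^2)
      / (2 - 2*(u⁻¹)^2 + 6*(u⁻¹)^4 - 30*(u⁻¹)^6) = Lf u
  have hd : 2 - 2*(u⁻¹)^2 + 6*(u⁻¹)^4 - 30*(u⁻¹)^6 ≠ 0 := by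
    have heq : 2 - 2*(u⁻¹)^2 + 6*(u⁻¹)^4 - 30*(u⁻¹)^6
        = 2*(u^6 - u^4 + 3*u^2 - 15)/u^6 := by field_simp; ring
    rw [heq]
    exact div_ne_zero (mul_ne_zero two_ne_zero hD1) (pow_ne_zero 6 hu0)
  have hLf : Lf u = ((2*u^4 - 12*u^2 - 15)*(u^2-1)) / (2*(u^6 - u^4 + 3*u^2 - 15)) := by
    unfold Lf
    rw [sub_div' hD1]
    field_simp
    ring
  rw [hLf, div_eq_div_iff hd (mul_ne_zero two_ne_zero hD1)]
  field_simp
  ring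

/-- As u → ∞, μ₁(u) = u² + 1 - u φ(u)/(1-Φ(u)) satisfies μ₁(u) ~ 2/(u²-1). -/
theorem stmt18 :
    Filter.Tendsto
      (fun u : ℝ => (u ^ 2 + 1 - u * phi u / (1 - Phi u)) * (u ^ 2 - 1) / 2)
      Filter.atTop (nhds 1) := by
  apply tendsto_of_tendsto_of_tendsto_of_le_of_le' Lf_tendsto Hf_tendsto
  · -- Lf ≤ target
    filter_upwards [eventually_ge_atTop (2:ℝ)] with u hu
    have hu0 : (0:ℝ) < u := by linarith
    have hphi := phi_pos u
    have hD1pos : (0:ℝ) < u^6 - u^4 + 3*u^2 - 15 := D1_pos u hu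
    have hlow := tail_lower u hu0
    have hlowpos : (0:ℝ) < phi u * ((u^6 - u^4 + 3*u^2 - 15)/u^7) := by positivity
    have hTpos : (0:ℝ) < 1 - Phi u := lt_of_lt_of_le hlowpos hlow
    have hstep : u * phi u / (1 - Phi u) ≤ u^8/(u^6 - u^4 + 3*u^2 - 15) := by
      have h1 : u * phi u / (1 - Phi u) ≤ u * phi u / (phi u * ((u^6 - u^4 + 3*u^2 - 15)/u^7)) :=
        div_le_div_of_nonneg_left (by positivity) hlowpos hlow
      have h2 : u * phi u / (phi u * ((u^6 - u^4 + 3*u^2 - 15)/u^7))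
          = u^8/(u^6 - u^4 + 3*u^2 - 15) := by
        field_simp
      linarith [h1, h2.le, h2.ge]
    unfold Lf
    have hsq : (0:ℝ) ≤ u^2 - 1 := by nlinarith
    nlinarith [mul_le_mul_of_nonneg_right hstep hsq]
  · -- target ≤ Hf
    filter_upwards [eventually_ge_atTop (2:ℝ)] with u hu
    have hu0 : (0:ℝ) < u := by linarith
    have hphi := phi_pos u
    have hD1pos : (0:ℝ) < u^6 - u^4 + 3*u^2 - 15 := D1_pos u hu
    have hD2pos : (0:ℝ) < u^4 - u^2 + 3 := by nlinarith [sq_nonneg (u^2-1)]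
    have hlow := tail_lower u hu0
    have hup := tail_upper u hu0
    have hlowpos : (0:ℝ) < phi u * ((u^6 - u^4 + 3*u^2 - 15)/u^7) := by positivity
    have hTpos : (0:ℝ) < 1 - Phi u := lt_of_lt_of_le hlowpos hlow
    have huppos : (0:ℝ) < phi u * ((u^4 - u^2 + 3)/u^5) := by positivity
    have hstep : u^6/(u^4 - u^2 + 3) ≤ u * phi u / (1 - Phi u) := by
      have h1 : u * phi u / (phi u * ((u^4 - u^2 + 3)/u^5)) ≤ u * phi u / (1 - Phi u) :=
        div_le_div_of_nonneg_left (by positivity) hTpos hup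
      have h2 : u * phi u / (phi u * ((u^4 - u^2 + 3)/u^5)) = u^6/(u^4 - u^2 + 3) := by
        field_simp
      linarith [h1, h2.le, h2.ge]
    unfold Hf
    have hsq : (0:ℝ) ≤ u^2 - 1 := by nlinarith
    nlinarith [mul_le_mul_of_nonneg_right hstep hsq]
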